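/- Failure of the deduction theorem: the judgement ⊢ (η ∧ ((η ⊗ ρ) ⊸ θ)) ⊸ (ρ ⊸ θ) is not a tautology over the Lawvere quantale; specifically, with m(η) = 1/4, m(ρ) = 0, m(θ) = 1, the interpretation of the formula is nonzero. -/
import Mathlib


open ENNReal

/-- Failure of the deduction theorem: with `m(η) = 1/4`, `m(ρ) = 0`,
`m(θ) = 1`, the formula `(η ∧ ((η ⊗ ρ) ⊸ θ)) ⊸ (ρ ⊸ θ)` evaluates to a
nonzero value, so the judgement `⊢ (η ∧ ((η ⊗ ρ) ⊸ θ)) ⊸ (ρ ⊸ θ)` is not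
a tautology. -/
theorem deduction_theorem_fails :
    ((1 : ℝ≥0∞) - (0 : ℝ≥0∞)) - max (1/4 : ℝ≥0∞) ((1 : ℝ≥0∞) - ((1/4 : ℝ≥0∞) + 0)) ≠ 0 := by
  rw [tsub_zero, add_zero, ← pos_iff_ne_zero, tsub_pos_iff_lt, max_lt_iff]
  constructor
  · exact ENNReal.div_lt_of_lt_mul (by norm_num)
  · exact ENNReal.sub_lt_self one_ne_top one_ne_zero (by norm_num)
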